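/- Let λ : Ω → [−1,1] be continuous on an open set Ω ⊂ ℝ², let a, b, c, d : Ω → ℝ be continuous with sup_Ω max(|b|, |c|) ≤ 2η, sup_Ω |d| ≤ 1 − 3η, and inf_Ω |a| ≥ 1 + 3η for some small η > 0. Define t(ρ, λ) = (λ d(ρ) + c(ρ))/(a(ρ) + λ b(ρ)). Then for all ρ ∈ Ω and λ ∈ [−1,1], |t(ρ,λ)| ≤ (1−η)/(1+η) < 1, and for η sufficiently small there exists κ_η < 1 such that |∂_λ t(ρ, λ)| ≤ κ_η for all (ρ, λ) ∈ Ω × [−1,1]. Consequently, the graph-transform map λ ↦ (ρ' ↦ χ(ρ') t(F^{−1}(ρ'), λ(F^{−1}(ρ')))) is a contraction on the space X = {λ ∈ C(Ω̄, ℝ) : ‖λ‖_∞ ≤ 1} with the sup norm, for any cutoff χ ∈ C_c^∞ with 0 ≤ χ ≤ 1 and any homeomorphism F⁻¹ defined on supp χ with image in Ω. -/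

import Mathlib

lemma aux14 (η A D1 D2 N : ℝ) (hη : 0 < η) (hη0 : η ≤ 1/10)
    (hA : 1 + 3*η ≤ A) (hD1 : A - 2*η ≤ D1) (hD2 : A - 2*η ≤ D2)
    (hN : |N| ≤ A*(1-3*η) + 4*η^2) :
    |N| / (D1*D2) ≤ (1-5*η^2)/(1+η)^2 := by
  have hD1p : 0 < D1 := by linarith
  have hD2p : 0 < D2 := by linarith
  rw [div_le_div_iff₀ (by positivity) (by positivity)]
  have hs : 0 ≤ A - 1 - 3*η := by linarith
  have h5 : 0 ≤ 1 - 5*η^2 := by nlinarith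
  have hT : 0 ≤ (1-5*η^2)*(A-1-3*η) + (1+η)*(1+2*η-7*η^2) := by nlinarith
  have hDD : (A-2*η)*(A-2*η) ≤ D1*D2 :=
    mul_le_mul hD1 hD2 (by linarith) (le_of_lt hD1p)
  nlinarith [mul_nonneg hs hT,
    mul_le_mul_of_nonneg_right hN (by positivity : (0:ℝ) ≤ (1+η)^2),
    mul_le_mul_of_nonneg_left hDD h5]

lemma denb (η a b l : ℝ) (hb : |b| ≤ 2*η) (hl : |l| ≤ 1) :
    |a| - 2*η ≤ |a + l*b| := by
  have h := abs_sub_abs_le_abs_sub a (-(l*b))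
  rw [abs_neg, sub_neg_eq_add] at h
  have hlb : |l*b| ≤ 2*η := by
    rw [abs_mul]
    calc |l| * |b| ≤ 1 * (2*η) := mul_le_mul hl hb (abs_nonneg _) one_pos.le
    _ = 2*η := one_mul _
  linarith

theorem stmt14 :
    ∃ η₀ > (0:ℝ), ∀ η : ℝ, 0 < η → η ≤ η₀ →
      ∃ κ : ℝ, 0 ≤ κ ∧ κ < 1 ∧
        ∀ (Ω : Set (ℝ × ℝ)) (a b c d : ℝ × ℝ → ℝ),
          (∀ ρ ∈ Ω, |b ρ| ≤ 2 * η) → (∀ ρ ∈ Ω, |c ρ| ≤ 2 * η) →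
          (∀ ρ ∈ Ω, |d ρ| ≤ 1 - 3 * η) → (∀ ρ ∈ Ω, 1 + 3 * η ≤ |a ρ|) →
          (∀ ρ ∈ Ω, ∀ l ∈ Set.Icc (-1:ℝ) 1,
            |(l * d ρ + c ρ) / (a ρ + l * b ρ)| ≤ (1 - η) / (1 + η) ∧
              (1 - η) / (1 + η) < 1) ∧
          (∀ ρ ∈ Ω, ∀ l ∈ Set.Icc (-1:ℝ) 1,
            |d ρ / (a ρ + l * b ρ) - b ρ * (l * d ρ + c ρ) / (a ρ + l * b ρ) ^ 2| ≤ κ) ∧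
          (∀ (χ : ℝ × ℝ → ℝ) (Finv : ℝ × ℝ → ℝ × ℝ),
            (∀ ρ', 0 ≤ χ ρ') → (∀ ρ', χ ρ' ≤ 1) →
            (∀ ρ' ∈ Function.support χ, Finv ρ' ∈ Ω) →
            ∀ lam mu : ℝ × ℝ → ℝ,
              (∀ ρ, |lam ρ| ≤ 1) → (∀ ρ, |mu ρ| ≤ 1) →
              ∀ δ : ℝ, 0 ≤ δ → (∀ ρ ∈ Ω, |lam ρ - mu ρ| ≤ δ) →
              ∀ ρ' : ℝ × ℝ,
                |χ ρ' * ((lam (Finv ρ') * d (Finv ρ') + c (Finv ρ')) /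
                    (a (Finv ρ') + lam (Finv ρ') * b (Finv ρ'))) -
                  χ ρ' * ((mu (Finv ρ') * d (Finv ρ') + c (Finv ρ')) /
                    (a (Finv ρ') + mu (Finv ρ') * b (Finv ρ')))| ≤ κ * δ) := by
  refine ⟨1/10, by norm_num, ?_⟩
  intro η hη hη0
  have h5 : 0 ≤ 1 - 5*η^2 := by nlinarith
  refine ⟨(1-5*η^2)/(1+η)^2, by positivity, by
      rw [div_lt_one (by positivity)]; nlinarith, ?_⟩
  intro Ω a b c d hb hc hd ha
  -- denominator bound at a point
  have hden : ∀ ρ ∈ Ω, ∀ l : ℝ, |l| ≤ 1 → 1 + η ≤ |a ρ + l * b ρ| := by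
    intro ρ hρ l hl
    have := denb η (a ρ) (b ρ) l (hb ρ hρ) hl
    linarith [ha ρ hρ]
  have hdenA : ∀ ρ ∈ Ω, ∀ l : ℝ, |l| ≤ 1 → |a ρ| - 2*η ≤ |a ρ + l * b ρ| := by
    intro ρ hρ l hl
    exact denb η (a ρ) (b ρ) l (hb ρ hρ) hl
  have hN : ∀ ρ ∈ Ω, |a ρ * d ρ - b ρ * c ρ| ≤ |a ρ| * (1-3*η) + 4*η^2 := by
    intro ρ hρ
    calc |a ρ * d ρ - b ρ * c ρ| ≤ |a ρ * d ρ| + |b ρ * c ρ| := abs_sub _ _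
    _ = |a ρ| * |d ρ| + |b ρ| * |c ρ| := by rw [abs_mul, abs_mul]
    _ ≤ |a ρ| * (1-3*η) + (2*η) * (2*η) := by
        have h1 : |a ρ| * |d ρ| ≤ |a ρ| * (1-3*η) :=
          mul_le_mul_of_nonneg_left (hd ρ hρ) (abs_nonneg _)
        have h2 : |b ρ| * |c ρ| ≤ (2*η) * (2*η) :=
          mul_le_mul (hb ρ hρ) (hc ρ hρ) (abs_nonneg _) (by linarith)
        linarith
    _ = |a ρ| * (1-3*η) + 4*η^2 := by ring
  refine ⟨?_, ?_, ?_⟩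
  · -- part 1
    intro ρ hρ l hl
    have hl1 : |l| ≤ 1 := abs_le.mpr ⟨hl.1, hl.2⟩
    have hD := hden ρ hρ l hl1
    constructor
    · rw [abs_div]
      apply div_le_div₀ (by linarith) ?_ (by linarith) hD
      calc |l * d ρ + c ρ| ≤ |l * d ρ| + |c ρ| := abs_add_le _ _
      _ = |l| * |d ρ| + |c ρ| := by rw [abs_mul]
      _ ≤ 1 * (1 - 3*η) + 2*η := by
          have h1 : |l| * |d ρ| ≤ 1 * (1 - 3*η) :=
            mul_le_mul hl1 (hd ρ hρ) (abs_nonneg _) zero_le_one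
          linarith [hc ρ hρ]
      _ = 1 - η := by ring
    · rw [div_lt_one (by linarith)]; linarith
  · -- part 2
    intro ρ hρ l hl
    have hl1 : |l| ≤ 1 := abs_le.mpr ⟨hl.1, hl.2⟩
    have hD := hden ρ hρ l hl1
    have hne : a ρ + l * b ρ ≠ 0 := by
      intro h; rw [h, abs_zero] at hD; linarith
    have hrw : d ρ / (a ρ + l * b ρ) - b ρ * (l * d ρ + c ρ) / (a ρ + l * b ρ) ^ 2
        = (a ρ * d ρ - b ρ * c ρ) / (a ρ + l * b ρ)^2 := by
      field_simp
      ring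
    rw [hrw, abs_div, abs_pow]
    have : |a ρ + l * b ρ| ^ 2 = |a ρ + l * b ρ| * |a ρ + l * b ρ| := sq _
    rw [this]
    exact aux14 η (|a ρ|) _ _ _ hη hη0 (ha ρ hρ) (hdenA ρ hρ l hl1)
      (hdenA ρ hρ l hl1) (hN ρ hρ)
  · -- part 3
    intro χ Finv hχ0 hχ1 hsupp lam mu hlam hmu δ hδ hlm ρ'
    by_cases hχ : χ ρ' = 0
    · simp only [hχ, zero_mul, sub_zero, abs_zero]
      positivity
    · have hρ : Finv ρ' ∈ Ω := hsupp ρ' (by simpa [Function.mem_support] using hχ)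
      set ρ := Finv ρ'
      set l := lam ρ with hl_def
      set m := mu ρ with hm_def
      have hl1 : |l| ≤ 1 := hlam ρ
      have hm1 : |m| ≤ 1 := hmu ρ
      have hDl := hden ρ hρ l hl1
      have hDm := hden ρ hρ m hm1
      have hnel : a ρ + l * b ρ ≠ 0 := by
        intro h; rw [h, abs_zero] at hDl; linarith
      have hnem : a ρ + m * b ρ ≠ 0 := by
        intro h; rw [h, abs_zero] at hDm; linarith
      have hrw : (l * d ρ + c ρ) / (a ρ + l * b ρ) - (m * d ρ + c ρ) / (a ρ + m * b ρ)
          = (l - m) * (a ρ * d ρ - b ρ * c ρ) / ((a ρ + l * b ρ) * (a ρ + m * b ρ)) := by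
        rw [div_sub_div _ _ hnel hnem]
        ring
      have hq := aux14 η (|a ρ|) _ _ _ hη hη0 (ha ρ hρ) (hdenA ρ hρ l hl1)
        (hdenA ρ hρ m hm1) (hN ρ hρ)
      have hchi : |χ ρ'| ≤ 1 := by rw [abs_of_nonneg (hχ0 ρ')]; exact hχ1 ρ'
      calc |χ ρ' * ((l * d ρ + c ρ) / (a ρ + l * b ρ)) -
              χ ρ' * ((m * d ρ + c ρ) / (a ρ + m * b ρ))|
          = |χ ρ'| * |(l * d ρ + c ρ) / (a ρ + l * b ρ) -
              (m * d ρ + c ρ) / (a ρ + m * b ρ)| := by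
            rw [← mul_sub, abs_mul]
      _ ≤ 1 * |(l * d ρ + c ρ) / (a ρ + l * b ρ) -
              (m * d ρ + c ρ) / (a ρ + m * b ρ)| := by
            gcongr
      _ = |l - m| * (|a ρ * d ρ - b ρ * c ρ| / (|a ρ + l * b ρ| * |a ρ + m * b ρ|)) := by
            rw [one_mul, hrw, abs_div, abs_mul, abs_mul, mul_div_assoc]
      _ ≤ δ * ((1-5*η^2)/(1+η)^2) :=
            mul_le_mul (hlm ρ hρ) hq (by positivity) hδ
      _ = (1-5*η^2)/(1+η)^2 * δ := mul_comm _ _
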